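/- Let m ≥ 1 and r, k ≥ 0 be integers, let A ⊆ {1, …, r}, and let ℓ⁽¹⁾, …, ℓ⁽ᵐ⁾ be pairwise distinct elements of ℤʳ each supported on A (that is, ℓ⁽ʲ⁾_i = 0 for all i ∉ A). Let σ₁, …, σ_m be entire functions on ℂʳ × ℂᵏ. Suppose that Σ_{j=1}^{m} (Π_{i ∈ A} t_i^{ℓ⁽ʲ⁾_i}) · σ_j(t, w) = 0 for every (t, w) ∈ ℂʳ × ℂᵏ such that t_i ≠ 0 for all i ∈ A and t_i = 0 for all i ∉ A. Then there exists j ∈ {1, …, m} such that σ_j(0, w) = 0 for all w ∈ ℂᵏ. -/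

import Mathlib

lemma stmt9_prod_zpow {ι : Type*} (s : Finset ι) (z : ℂ) (hz : z ≠ 0) (f : ι → ℤ) :
    ∏ i ∈ s, z ^ f i = z ^ (∑ i ∈ s, f i) := by
  classical
  induction s using Finset.induction_on with
  | empty => simp
  | insert _ _ hx ih =>
      rw [Finset.prod_insert hx, Finset.sum_insert hx, zpow_add₀ hz, ih]

/-- Lemma "one to one A" for the trivial family ℂʳ × ℂᵏ → ℂʳ: the
inductive generalization of the linear independence lemma over a subset A of the
coordinates. -/
theorem stmt_9 (m r k : ℕ) (hm : 1 ≤ m) (A : Finset (Fin r))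
    (l : Fin m → Fin r → ℤ) (hl : Function.Injective l)
    (hsupp : ∀ j, ∀ i ∉ A, l j i = 0)
    (σ : Fin m → ((Fin r → ℂ) × (Fin k → ℂ)) → ℂ)
    (hσ : ∀ j, AnalyticOnNhd ℂ (σ j) Set.univ)
    (heq : ∀ (t : Fin r → ℂ) (w : Fin k → ℂ),
      (∀ i ∈ A, t i ≠ 0) → (∀ i ∉ A, t i = 0) →
      ∑ j, (∏ i ∈ A, t i ^ l j i) * σ j (t, w) = 0) :
    ∃ j, ∀ w : Fin k → ℂ, σ j (0, w) = 0 := by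
  classical
  -- a polynomial whose non-roots separate the exponent vectors
  set q : Fin m × Fin m → Polynomial ℤ :=
    fun p => ∑ i : Fin r, Polynomial.C (l p.1 i - l p.2 i) * Polynomial.X ^ ((i : ℕ) + 1)
    with hqdef
  have hqcoeff : ∀ p : Fin m × Fin m, ∀ i : Fin r,
      (q p).coeff ((i : ℕ) + 1) = l p.1 i - l p.2 i := by
    intro p i
    rw [hqdef]
    simp only [Polynomial.finset_sum_coeff, Polynomial.coeff_C_mul, Polynomial.coeff_X_pow]
    rw [Finset.sum_eq_single i]
    · simp
    · intro b _ hb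
      have hb' : ¬ ((i : ℕ) + 1 = (b : ℕ) + 1) := fun h => hb (Fin.ext (by omega))
      simp [hb']
      exact fun h => absurd (Fin.ext h) (Ne.symm hb)
    · simp
  have hqne : ∀ p ∈ (Finset.univ : Finset (Fin m)).offDiag, q p ≠ 0 := by
    intro p hp
    rw [Finset.mem_offDiag] at hp
    have hne : l p.1 ≠ l p.2 := fun h => hp.2.2 (hl h)
    obtain ⟨i, hi⟩ : ∃ i, l p.1 i ≠ l p.2 i := by
      by_contra h
      push_neg at h
      exact hne (funext h)
    intro h0
    have := hqcoeff p i
    rw [h0] at this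
    simp at this
    omega
  set P : Polynomial ℤ := ∏ p ∈ (Finset.univ : Finset (Fin m)).offDiag, q p with hP
  have hPne : P ≠ 0 := Finset.prod_ne_zero_iff.mpr hqne
  obtain ⟨x, hx1, hxroot⟩ : ∃ x : ℤ, 1 ≤ x ∧ ¬ P.IsRoot x := by
    obtain ⟨x, hx, hxr⟩ := (Set.Ici_infinite (1 : ℤ)).exists_notMem_finite
      (Polynomial.finite_setOf_isRoot hPne)
    exact ⟨x, hx, hxr⟩
  -- the exponents
  set e : Fin m → ℤ := fun j => ∑ i ∈ A, x ^ ((i : ℕ) + 1) * l j i with he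
  have heval : ∀ p : Fin m × Fin m, (q p).eval x = e p.1 - e p.2 := by
    intro p
    rw [hqdef, he]
    simp only [Polynomial.eval_finset_sum, Polynomial.eval_mul, Polynomial.eval_C,
      Polynomial.eval_pow, Polynomial.eval_X]
    rw [← Finset.sum_sub_distrib]
    rw [← Finset.sum_subset (Finset.subset_univ A)]
    · exact Finset.sum_congr rfl fun i _ => by ring
    · intro i _ hi
      rw [hsupp p.1 i hi, hsupp p.2 i hi]
      ring
  have einj : Function.Injective e := by
    intro j j' h
    by_contra hne
    have hmem : (j, j') ∈ (Finset.univ : Finset (Fin m)).offDiag := by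
      simp [Finset.mem_offDiag, hne]
    have : P.eval x = 0 := by
      rw [hP, Polynomial.eval_prod]
      exact Finset.prod_eq_zero hmem (by rw [heval]; simp [h])
    exact hxroot this
  -- the minimizing index
  obtain ⟨j0, -, hj0⟩ := Finset.exists_min_image (Finset.univ : Finset (Fin m)) e
    ⟨⟨0, hm⟩, Finset.mem_univ _⟩
  refine ⟨j0, fun w => ?_⟩
  -- the curve
  set c : Fin r → ℕ := fun i => x.toNat ^ ((i : ℕ) + 1) with hc
  have hcpos : ∀ i, 0 < c i := fun i => pow_pos (by omega) _
  set T : ℂ → (Fin r → ℂ) := fun z i => if i ∈ A then z ^ c i else 0 with hT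
  have hTcont : Continuous T := by
    refine continuous_pi fun i => ?_
    by_cases hi : i ∈ A <;> simp only [hT, hi, if_true, if_false]
    · exact continuous_pow _
    · exact continuous_const
  have hT0 : T 0 = 0 := by
    funext i
    simp [hT, zero_pow (hcpos i).ne']
  set d : Fin m → ℕ := fun j => (e j - e j0).toNat with hd
  set F : ℂ → ℂ := fun z => ∑ j, z ^ d j * σ j (T z, w) with hF
  have hFcont : Continuous F := by
    refine continuous_finset_sum _ fun j _ => ?_
    refine (continuous_pow _).mul ?_
    have hσc : Continuous (σ j) := by
      rw [← continuousOn_univ]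
      exact (hσ j).continuousOn
    exact hσc.comp (hTcont.prodMk continuous_const)
  have hFz : ∀ z : ℂ, z ≠ 0 → F z = 0 := by
    intro z hz
    have h1 : ∀ i ∈ A, T z i ≠ 0 := fun i hi => by
      simp only [hT, hi, if_true]
      exact pow_ne_zero _ hz
    have h2 : ∀ i ∉ A, T z i = 0 := fun i hi => by simp [hT, hi]
    have hsum := heq (T z) w h1 h2
    have hprod : ∀ j, ∏ i ∈ A, (T z i) ^ l j i = z ^ e j := by
      intro j
      rw [he]
      have hcongr : ∀ i ∈ A, (T z i) ^ l j i = z ^ (x ^ ((i : ℕ) + 1) * l j i) := by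
        intro i hi
        simp only [hT, hi, if_true, hc]
        rw [← zpow_natCast z (x.toNat ^ ((i : ℕ) + 1)), ← zpow_mul]
        congr 1
        push_cast [Int.toNat_of_nonneg (by omega : (0:ℤ) ≤ x)]
        ring
      rw [Finset.prod_congr rfl hcongr, stmt9_prod_zpow A z hz]
    have key : F z = z ^ (-(e j0)) * ∑ j, z ^ e j * σ j (T z, w) := by
      simp only [hF]
      rw [Finset.mul_sum]
      refine Finset.sum_congr rfl fun j _ => ?_
      rw [← mul_assoc, ← zpow_add₀ hz]
      congr 1
      rw [← zpow_natCast z (d j)]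
      congr 1
      have hnn : e j0 ≤ e j := hj0 j (Finset.mem_univ j)
      simp only [hd]
      omega
    simp only [hprod] at hsum
    rw [key, hsum, mul_zero]
  have hF0 : F 0 = σ j0 (0, w) := by
    simp only [hF]
    rw [Finset.sum_eq_single j0]
    · have : d j0 = 0 := by simp [hd]
      rw [this, hT0]
      simp
    · intro j _ hj
      have hlt : e j0 < e j :=
        lt_of_le_of_ne (hj0 j (Finset.mem_univ j)) (fun h => hj (einj h.symm))
      have hd0 : d j ≠ 0 := by simp only [hd]; omega
      rw [zero_pow hd0, zero_mul]
    · intro h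
      exact absurd (Finset.mem_univ j0) h
  have h1 : Filter.Tendsto F (nhdsWithin 0 {(0:ℂ)}ᶜ) (nhds (F 0)) :=
    (hFcont.continuousAt).tendsto.mono_left nhdsWithin_le_nhds
  have h2 : Filter.Tendsto F (nhdsWithin 0 {(0:ℂ)}ᶜ) (nhds 0) := by
    refine Filter.Tendsto.congr' ?_ tendsto_const_nhds
    filter_upwards [self_mem_nhdsWithin] with z hz using (hFz z hz).symm
  have := tendsto_nhds_unique h1 h2
  rw [← hF0, this]
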